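/- The periodic discrete Hilbert transform ℍ_per u = c * u (circular convolution with the kernel c) is skew-symmetric and satisfies ‖ℍ_per u‖ ≤ ‖u‖ for all N-periodic grid functions u, with equality ‖ℍ_per u‖ = ‖u‖ whenever Σ_{j=0}^{N−1} u_j = 0. -/

import Mathlib

open Real Finset

/-- The kernel of the periodic discrete Hilbert transform, extended N-periodically,
with value 0 at multiples of N. -/
noncomputable def cker (N : ℕ) (n : ℤ) : ℝ :=
  if (N : ℤ) ∣ n then 0
  else (1 - (-1 : ℝ) ^ n) / (2 * N)
         * (Real.cos (Real.pi * n / (2 * N)) / Real.sin (Real.pi * n / (2 * N)))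
       - (1 + (-1 : ℝ) ^ n) / (2 * N) * Real.tan (Real.pi * n / (2 * N))

/-- Periodic discrete Hilbert transform: circular convolution with `cker`. -/
noncomputable def Hper (N : ℕ) (u : ℤ → ℝ) (j : ℤ) : ℝ :=
  ∑ k ∈ Finset.range N, cker N (j - k) * u k





noncomputable def gker (N : ℕ) (k : ℤ) : ℝ :=
  (2 / N) * ∑ n ∈ Finset.range ((N - 1) / 2), Real.sin (2 * π * (n + 1) * k / N)

lemma twosin (x t : ℝ) : Real.cos x - Real.cos (x + 2 * t) = 2 * Real.sin t * Real.sin (x + t) := by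
  rw [Real.cos_sub_cos]
  have h1 : (x + (x + 2 * t)) / 2 = x + t := by ring
  have h2 : (x - (x + 2 * t)) / 2 = -t := by ring
  rw [h1, h2, Real.sin_neg]
  ring

lemma twocos (x t : ℝ) : Real.sin (x + 2 * t) - Real.sin x = 2 * Real.sin t * Real.cos (x + t) := by
  rw [Real.sin_sub_sin]
  have h1 : (x + 2 * t - x) / 2 = t := by ring
  have h2 : (x + 2 * t + x) / 2 = x + t := by ring
  rw [h1, h2]

lemma telescope_sin (θ : ℝ) (M : ℕ) :
    2 * Real.sin θ * ∑ n ∈ Finset.range M, Real.sin (2 * (n + 1) * θ)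
      = Real.cos θ - Real.cos ((2 * M + 1) * θ) := by
  induction M with
  | zero => simp
  | succ M ih =>
    rw [Finset.sum_range_succ, mul_add, ih]
    have h := twosin ((2 * (M:ℝ) + 1) * θ) θ
    have e1 : (2 * (M:ℝ) + 1) * θ + 2 * θ = (2 * ((M:ℝ)+1) + 1) * θ := by ring
    have e2 : (2 * (M:ℝ) + 1) * θ + θ = 2 * ((M:ℝ) + 1) * θ := by ring
    rw [e1, e2] at h
    push_cast
    linarith [h]

lemma telescope_cos (θ : ℝ) (M : ℕ) :
    2 * Real.sin θ * ∑ n ∈ Finset.range M, Real.cos (2 * (n + 1) * θ)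
      = Real.sin ((2 * M + 1) * θ) - Real.sin θ := by
  induction M with
  | zero => simp
  | succ M ih =>
    rw [Finset.sum_range_succ, mul_add, ih]
    have h := twocos ((2 * (M:ℝ) + 1) * θ) θ
    have e1 : (2 * (M:ℝ) + 1) * θ + 2 * θ = (2 * ((M:ℝ)+1) + 1) * θ := by ring
    have e2 : (2 * (M:ℝ) + 1) * θ + θ = 2 * ((M:ℝ) + 1) * θ := by ring
    rw [e1, e2] at h
    push_cast
    linarith [h]

lemma sin_pi_k_div_N_ne (N : ℕ) (hN : 0 < N) (k : ℤ) (hk : ¬ (N : ℤ) ∣ k) :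
    Real.sin (π * k / N) ≠ 0 := by
  intro h
  rcases Real.sin_eq_zero_iff.1 h with ⟨n, hn⟩
  apply hk
  refine ⟨n, ?_⟩
  have hNne : (N : ℝ) ≠ 0 := Nat.cast_ne_zero.2 hN.ne'
  rw [eq_div_iff hNne] at hn
  have h2 : π * ((n:ℝ) * N) = π * k := by linear_combination hn
  have h3 : (n:ℝ) * N = k := mul_left_cancel₀ Real.pi_ne_zero h2
  have : (k : ℝ) = (N : ℝ) * n := by linear_combination -h3
  exact_mod_cast this

lemma cos_pi_k_div_2N_ne (N : ℕ) (hN : 0 < N) (k : ℤ) (hk : ¬ (N : ℤ) ∣ k) :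
    Real.cos (π * k / (2 * N)) ≠ 0 := by
  intro h
  rcases Real.cos_eq_zero_iff.1 h with ⟨n, hn⟩
  apply hk
  refine ⟨2 * n + 1, ?_⟩
  have hNne : (2 * (N : ℝ)) ≠ 0 := by positivity
  rw [div_eq_div_iff hNne two_ne_zero] at hn
  have h2 : π * ((k:ℝ) * 2) = π * ((2 * n + 1) * (2 * N)) := by linear_combination hn
  have h3 : (k:ℝ) * 2 = (2 * (n:ℝ) + 1) * (2 * N) := mul_left_cancel₀ Real.pi_ne_zero h2
  have : (k : ℝ) = (N : ℝ) * (2 * n + 1) := by linear_combination h3 / 2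
  exact_mod_cast this

lemma sin_pi_k_div_2N_ne (N : ℕ) (hN : 0 < N) (k : ℤ) (hk : ¬ (N : ℤ) ∣ k) :
    Real.sin (π * k / (2 * N)) ≠ 0 := by
  intro h
  rcases Real.sin_eq_zero_iff.1 h with ⟨n, hn⟩
  apply hk
  refine ⟨2 * n, ?_⟩
  have hNne : (2 * (N : ℝ)) ≠ 0 := by positivity
  rw [eq_div_iff hNne] at hn
  have h2 : π * ((n:ℝ) * (2 * N)) = π * k := by linear_combination hn
  have h3 : (n:ℝ) * (2 * N) = k := mul_left_cancel₀ Real.pi_ne_zero h2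
  have : (k : ℝ) = (N : ℝ) * (2 * n) := by linear_combination -h3
  exact_mod_cast this
lemma cker_eq_gker (N : ℕ) (hN : Odd N) (hN0 : 0 < N) (k : ℤ) : cker N k = gker N k := by
  have hNr : (N : ℝ) ≠ 0 := Nat.cast_ne_zero.2 hN0.ne'
  set M : ℕ := (N - 1) / 2 with hMdef
  have hM : 2 * M + 1 = N := by rcases hN with ⟨t, ht⟩; omega
  by_cases hd : (N : ℤ) ∣ k
  · obtain ⟨m, rfl⟩ := hd
    rw [cker, if_pos ⟨m, rfl⟩, gker]
    rw [eq_comm, mul_eq_zero]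
    right
    apply Finset.sum_eq_zero
    intro n _
    have harg : 2 * π * ((n : ℝ) + 1) * ((((N:ℤ) * m : ℤ)) : ℝ) / N
        = ((2 * (n + 1) * m : ℤ) : ℝ) * π := by
      push_cast
      field_simp
    rw [harg, Real.sin_int_mul_pi]
  · set θ : ℝ := π * k / N with hθdef
    set x : ℝ := π * k / (2 * N) with hxdef
    have hsinθ : Real.sin θ ≠ 0 := sin_pi_k_div_N_ne N hN0 k hd
    have hcosx : Real.cos x ≠ 0 := cos_pi_k_div_2N_ne N hN0 k hd
    have hsinx : Real.sin x ≠ 0 := sin_pi_k_div_2N_ne N hN0 k hd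
    have hθx : θ = 2 * x := by rw [hθdef, hxdef]; field_simp; try ring
    have hsum : ∑ n ∈ Finset.range M, Real.sin (2 * π * (n + 1) * k / N)
        = (Real.cos θ - (-1 : ℝ) ^ k) / (2 * Real.sin θ) := by
      have ht := telescope_sin θ M
      have hsumeq : ∑ n ∈ Finset.range M, Real.sin (2 * ((n:ℝ) + 1) * θ)
          = ∑ n ∈ Finset.range M, Real.sin (2 * π * (n + 1) * k / N) := by
        refine Finset.sum_congr rfl fun n _ => ?_
        congr 1
        rw [hθdef]
        ring
      have hlast : ((2 * (M:ℝ) + 1)) * θ = (k : ℝ) * π := by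
        have h1 : (2 * (M:ℝ) + 1) = (N : ℝ) := by exact_mod_cast congrArg (Nat.cast : ℕ → ℝ) hM
        rw [h1, hθdef]
        field_simp
        try ring
      rw [hsumeq, hlast] at ht
      have hck : Real.cos ((k:ℝ) * π) = (-1 : ℝ) ^ k := by
        have h := Real.cos_int_mul_pi_sub 0 k
        norm_num at h
        exact h
      rw [hck] at ht
      rw [eq_div_iff (mul_ne_zero two_ne_zero hsinθ)]
      linear_combination ht
    rw [cker, if_neg hd, gker, hsum, Real.tan_eq_sin_div_cos]
    have hs2 : Real.sin θ = 2 * Real.sin x * Real.cos x := by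
      rw [hθx, Real.sin_two_mul]
    rcases Int.even_or_odd k with hk | hk
    · have hpow : (-1 : ℝ) ^ k = 1 := hk.neg_one_zpow
      have hnum : Real.cos θ - 1 = -2 * Real.sin x ^ 2 := by
        rw [hθx, Real.cos_two_mul]
        linear_combination 2 * Real.sin_sq_add_cos_sq x
      rw [hpow, hnum, hs2]
      rw [← hxdef]
      clear_value x θ
      field_simp
      ring
    · have hpow : (-1 : ℝ) ^ k = -1 := hk.neg_one_zpow
      have hnum : Real.cos θ - (-1) = 2 * Real.cos x ^ 2 := by
        rw [hθx, Real.cos_two_mul]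
        ring
      rw [hpow, hnum, hs2]
      rw [← hxdef]
      clear_value x θ
      field_simp
      ring


lemma exp_orth (N : ℕ) (hN0 : 0 < N) (j : ℤ) :
    ∑ k ∈ Finset.range N, Complex.exp (2 * Real.pi * Complex.I * j * k / N)
      = if (N : ℤ) ∣ j then (N : ℂ) else 0 := by
  have hNC : (N : ℂ) ≠ 0 := Nat.cast_ne_zero.2 hN0.ne'
  have hterm : ∀ k : ℕ, Complex.exp (2 * Real.pi * Complex.I * j * k / N)
      = (Complex.exp (2 * Real.pi * Complex.I * j / N)) ^ k := by
    intro k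
    rw [← Complex.exp_nat_mul]
    congr 1
    ring
  rw [Finset.sum_congr rfl fun k _ => hterm k]
  by_cases hd : (N : ℤ) ∣ j
  · obtain ⟨m, rfl⟩ := hd
    have hζ : Complex.exp (2 * Real.pi * Complex.I * ((N : ℤ) * m : ℤ) / N) = 1 := by
      rw [show (2 * (Real.pi:ℂ) * Complex.I * (((N : ℤ) * m : ℤ) : ℂ) / N : ℂ)
          = (m : ℤ) * (2 * Real.pi * Complex.I) by push_cast; field_simp]
      exact Complex.exp_int_mul_two_pi_mul_I m
    rw [if_pos ⟨m, rfl⟩]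
    push_cast at hζ ⊢
    rw [hζ]
    simp
  · have hζN : (Complex.exp (2 * Real.pi * Complex.I * j / N)) ^ N = 1 := by
      rw [← Complex.exp_nat_mul]
      rw [show (N : ℂ) * (2 * Real.pi * Complex.I * j / N) = (j : ℤ) * (2 * Real.pi * Complex.I) by
        push_cast; field_simp]
      exact Complex.exp_int_mul_two_pi_mul_I j
    have hζ1 : Complex.exp (2 * Real.pi * Complex.I * j / N) ≠ 1 := by
      intro h
      rcases Complex.exp_eq_one_iff.1 h with ⟨n, hn⟩
      apply hd
      refine ⟨n, ?_⟩
      have h2πI : (2 * (Real.pi:ℂ) * Complex.I) ≠ 0 := by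
        simp [Complex.I_ne_zero, Real.pi_ne_zero, Complex.ofReal_ne_zero]
      have h2 : (2 * (Real.pi:ℂ) * Complex.I) * ((j:ℂ)) = (2 * (Real.pi:ℂ) * Complex.I) * ((n:ℂ) * N) := by
        have h3 := hn
        field_simp at h3
        linear_combination (2 * (Real.pi:ℂ) * Complex.I) * h3
      have h4 : (j : ℂ) = (n : ℂ) * N := mul_left_cancel₀ h2πI h2
      have h5 : (j : ℂ) = ((N * n : ℤ) : ℂ) := by push_cast; linear_combination h4
      exact_mod_cast h5
    rw [if_neg hd, geom_sum_eq hζ1, hζN]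
    simp

lemma cos_orth (N : ℕ) (hN0 : 0 < N) (j : ℤ) :
    ∑ k ∈ Finset.range N, Real.cos (2 * π * j * k / N) = if (N : ℤ) ∣ j then (N : ℝ) else 0 := by
  have h := exp_orth N hN0 j
  have hterm : ∀ k : ℕ, Complex.exp (2 * Real.pi * Complex.I * j * k / N)
      = Complex.ofReal (Real.cos (2 * π * j * k / N))
        + Complex.ofReal (Real.sin (2 * π * j * k / N)) * Complex.I := by
    intro k
    rw [show (2 * (Real.pi:ℂ) * Complex.I * j * k / N : ℂ)
        = ((2 * π * j * k / N : ℝ) : ℂ) * Complex.I by push_cast; ring]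
    rw [Complex.exp_mul_I, ← Complex.ofReal_cos, ← Complex.ofReal_sin]
  rw [Finset.sum_congr rfl fun k _ => hterm k] at h
  have hre := congrArg Complex.re h
  simpa only [Complex.re_sum, Complex.add_re, Complex.ofReal_re, Complex.mul_re,
    Complex.I_re, Complex.I_im, Complex.ofReal_im, mul_zero, mul_one, zero_mul, sub_zero,
    add_zero, zero_add, apply_ite Complex.re, Complex.natCast_re, Complex.zero_re] using hre

lemma sin_orth (N : ℕ) (hN0 : 0 < N) (j : ℤ) :
    ∑ k ∈ Finset.range N, Real.sin (2 * π * j * k / N) = 0 := by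
  have h := exp_orth N hN0 j
  have hterm : ∀ k : ℕ, Complex.exp (2 * Real.pi * Complex.I * j * k / N)
      = Complex.ofReal (Real.cos (2 * π * j * k / N))
        + Complex.ofReal (Real.sin (2 * π * j * k / N)) * Complex.I := by
    intro k
    rw [show (2 * (Real.pi:ℂ) * Complex.I * j * k / N : ℂ)
        = ((2 * π * j * k / N : ℝ) : ℂ) * Complex.I by push_cast; ring]
    rw [Complex.exp_mul_I, ← Complex.ofReal_cos, ← Complex.ofReal_sin]
  rw [Finset.sum_congr rfl fun k _ => hterm k] at h
  have him := congrArg Complex.im h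
  simpa only [Complex.im_sum, Complex.add_im, Complex.ofReal_im, Complex.mul_im,
    Complex.I_re, Complex.I_im, Complex.ofReal_re, mul_zero, mul_one, zero_mul, sub_zero,
    add_zero, zero_add, apply_ite Complex.im, Complex.natCast_im, Complex.zero_im, ite_self] using him

lemma cos_phase (N : ℕ) (hN0 : 0 < N) (j : ℤ) (φ : ℝ) :
    ∑ k ∈ Finset.range N, Real.cos (2 * π * j * k / N + φ)
      = (if (N : ℤ) ∣ j then (N : ℝ) else 0) * Real.cos φ := by
  simp only [Real.cos_add]
  rw [Finset.sum_sub_distrib, ← Finset.sum_mul, ← Finset.sum_mul, cos_orth N hN0 j,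
    sin_orth N hN0 j]
  ring
lemma prodsin (x y : ℝ) : Real.sin x * Real.sin y = (Real.cos (x - y) - Real.cos (x + y)) / 2 := by
  rw [Real.cos_sub, Real.cos_add]; ring

lemma inner_sum1 (N : ℕ) (hN0 : 0 < N) (m : ℤ) (M : ℕ) (hM : 2 * M + 1 = N)
    (n n' : ℕ) (hn : n < M) (hn' : n' < M) :
    ∑ k ∈ Finset.range N,
        Real.sin (2 * π * (n + 1) * k / N) * Real.sin (2 * π * (n' + 1) * ((m : ℝ) - k) / N)
      = if n = n' then -((N : ℝ) / 2) * Real.cos (2 * π * (n' + 1) * m / N) else 0 := by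
  set φ : ℝ := 2 * π * (n' + 1) * m / N with hφ
  have hNr : (N : ℝ) ≠ 0 := Nat.cast_ne_zero.2 hN0.ne'
  have hterm : ∀ k : ℕ,
      Real.sin (2 * π * (n + 1) * k / N) * Real.sin (2 * π * (n' + 1) * ((m : ℝ) - k) / N)
        = (Real.cos (2 * π * ((n + n' + 2 : ℤ)) * k / N + (-φ))
            - Real.cos (2 * π * ((((n : ℤ) - (n' : ℤ) : ℤ))) * k / N + φ)) / 2 := by
    intro k
    rw [prodsin]
    have e1 : 2 * π * ((n:ℝ) + 1) * k / N - 2 * π * ((n':ℝ) + 1) * ((m : ℝ) - k) / N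
        = 2 * π * (((n + n' + 2 : ℤ)) : ℝ) * k / N + (-φ) := by
      rw [hφ]; push_cast; ring
    have e2 : 2 * π * ((n:ℝ) + 1) * k / N + 2 * π * ((n':ℝ) + 1) * ((m : ℝ) - k) / N
        = 2 * π * ((((n : ℤ) - (n' : ℤ) : ℤ)) : ℝ) * k / N + φ := by
      rw [hφ]; push_cast; ring
    rw [e1, e2]
  rw [Finset.sum_congr rfl fun k _ => hterm k]
  rw [← Finset.sum_div, Finset.sum_sub_distrib, cos_phase N hN0 _ (-φ), cos_phase N hN0 _ φ]
  have hj1 : ¬ (N : ℤ) ∣ (n + n' + 2 : ℤ) := by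
    intro hd
    have h1 : (0 : ℤ) < (n + n' + 2 : ℤ) := by positivity
    have h2 := Int.le_of_dvd h1 hd
    omega
  have hj2 : ((N : ℤ) ∣ ((n : ℤ) - n')) ↔ n = n' := by
    constructor
    · intro hd
      by_contra hne
      have habs : ((n : ℤ) - n').natAbs < N := by omega
      have := Int.eq_zero_of_dvd_of_natAbs_lt_natAbs hd (by omega)
      omega
    · rintro rfl; simp
  rw [if_neg hj1]
  by_cases h : n = n'
  · rw [if_pos (hj2.2 h), if_pos h, Real.cos_neg]
    ring
  · rw [if_neg (fun hd => h (hj2.1 hd)), if_neg h]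
    ring

lemma cos_sum_eval (N : ℕ) (hN0 : 0 < N) (M : ℕ) (hM : 2 * M + 1 = N) (m : ℤ) :
    ∑ n ∈ Finset.range M, Real.cos (2 * π * (n + 1) * m / N)
      = ((if (N : ℤ) ∣ m then (N : ℝ) else 0) - 1) / 2 := by
  have hNr : (N : ℝ) ≠ 0 := Nat.cast_ne_zero.2 hN0.ne'
  by_cases hd : (N : ℤ) ∣ m
  · obtain ⟨t, rfl⟩ := hd
    have hterm : ∀ n : ℕ, Real.cos (2 * π * (n + 1) * (((N : ℤ) * t : ℤ) : ℝ) / N)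
        = 1 := by
      intro n
      rw [show 2 * π * ((n:ℝ) + 1) * (((N : ℤ) * t : ℤ) : ℝ) / N
          = (((n + 1 : ℕ) * t : ℤ) : ℝ) * (2 * π) from by push_cast; field_simp]
      exact Real.cos_int_mul_two_pi _
    rw [Finset.sum_congr rfl fun n _ => hterm n, if_pos ⟨t, rfl⟩]
    rw [Finset.sum_const, Finset.card_range]
    have : (M : ℝ) = ((N : ℝ) - 1) / 2 := by
      have : ((2 * M + 1 : ℕ) : ℝ) = (N : ℝ) := by exact_mod_cast hM
      push_cast at this
      linarith
    simp [this]
  · set θ : ℝ := π * m / N with hθ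
    have hsθ : Real.sin θ ≠ 0 := sin_pi_k_div_N_ne N hN0 m hd
    have ht := telescope_cos θ M
    have hsum : ∑ n ∈ Finset.range M, Real.cos (2 * ((n:ℝ) + 1) * θ)
        = ∑ n ∈ Finset.range M, Real.cos (2 * π * (n + 1) * m / N) := by
      refine Finset.sum_congr rfl fun n _ => ?_
      congr 1
      rw [hθ]; ring
    have hlast : (2 * (M:ℝ) + 1) * θ = (m : ℝ) * π := by
      have h1 : (2 * (M:ℝ) + 1) = (N : ℝ) := by exact_mod_cast congrArg (Nat.cast : ℕ → ℝ) hM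
      rw [h1, hθ]
      field_simp
      try ring
    rw [hsum, hlast] at ht
    rw [show ((m:ℝ)) * π = ((m:ℤ):ℝ) * π from rfl, Real.sin_int_mul_pi] at ht
    rw [if_neg hd]
    have h3 : Real.sin θ * (2 * (∑ n ∈ Finset.range M, Real.cos (2 * π * (n + 1) * m / N)))
        = Real.sin θ * (-1) := by linear_combination ht
    have h4 := mul_left_cancel₀ hsθ h3
    linarith [h4]

lemma gker_conv (N : ℕ) (hN : Odd N) (hN0 : 0 < N) (m : ℤ) :
    ∑ k ∈ Finset.range N, gker N k * gker N (m - k)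
      = 1 / N - (if (N : ℤ) ∣ m then 1 else 0) := by
  have hNr : (N : ℝ) ≠ 0 := Nat.cast_ne_zero.2 hN0.ne'
  set M : ℕ := (N - 1) / 2 with hMdef
  have hM : 2 * M + 1 = N := by rcases hN with ⟨t, ht⟩; omega
  have expand : ∀ k : ℕ, gker N k * gker N (m - k)
      = (4 / (N:ℝ)^2) * ∑ n ∈ Finset.range M, ∑ n' ∈ Finset.range M,
          Real.sin (2 * π * (n + 1) * k / N)
            * Real.sin (2 * π * (n' + 1) * ((m : ℝ) - k) / N) := by
    intro k
    rw [gker, gker,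
      show ((m - (k:ℕ) : ℤ) : ℝ) = (m:ℝ) - (k:ℝ) from by push_cast; ring,
      show (((k:ℕ):ℤ):ℝ) = ((k:ℕ):ℝ) from by push_cast; ring]
    rw [mul_mul_mul_comm, Finset.sum_mul_sum]
    congr 1
    ring
  rw [Finset.sum_congr rfl fun k _ => expand k, ← Finset.mul_sum]
  rw [Finset.sum_comm]
  rw [Finset.sum_congr rfl fun n _ => Finset.sum_comm]
  rw [Finset.sum_congr rfl fun n hn => Finset.sum_congr rfl fun n' hn' =>
    inner_sum1 N hN0 m M hM n n' (Finset.mem_range.1 hn) (Finset.mem_range.1 hn')]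
  rw [Finset.sum_congr rfl fun n hn => by
    rw [Finset.sum_ite_eq (Finset.range M) n
      (fun n' => -((N : ℝ) / 2) * Real.cos (2 * π * (n' + 1) * m / N)), if_pos hn]]
  rw [← Finset.mul_sum, cos_sum_eval N hN0 M hM m]
  by_cases hd : (N : ℤ) ∣ m
  · rw [if_pos hd, if_pos hd]
    field_simp
    ring
  · rw [if_neg hd, if_neg hd]
    field_simp
    ring
lemma gker_period (N : ℕ) (hN0 : 0 < N) (k : ℤ) : gker N (k + N) = gker N k := by
  have hNr : (N : ℝ) ≠ 0 := Nat.cast_ne_zero.2 hN0.ne'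
  rw [gker, gker]
  congr 1
  refine Finset.sum_congr rfl fun n _ => ?_
  rw [show 2 * π * ((n:ℝ) + 1) * ((k + (N:ℤ) : ℤ) : ℝ) / N
      = 2 * π * ((n:ℝ) + 1) * (k : ℝ) / N + ((n + 1 : ℕ) : ℤ) * (2 * π) from by
    push_cast; field_simp]
  exact Real.sin_add_int_mul_two_pi _ _

lemma gker_neg (N : ℕ) (k : ℤ) : gker N (-k) = - gker N k := by
  rw [gker, gker, ← mul_neg, ← Finset.sum_neg_distrib]
  congr 1
  refine Finset.sum_congr rfl fun n _ => ?_
  rw [show 2 * π * ((n:ℝ) + 1) * ((-k : ℤ) : ℝ) / N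
      = -(2 * π * ((n:ℝ) + 1) * (k : ℝ) / N) from by push_cast; ring]
  exact Real.sin_neg _

lemma shift1 (N : ℕ) (hN0 : 0 < N) (f : ℤ → ℝ) (hf : ∀ j : ℤ, f (j + N) = f j) :
    ∑ j ∈ Finset.range N, f (j + 1) = ∑ j ∈ Finset.range N, f j := by
  have h1 := Finset.sum_range_succ' (fun j : ℕ => f j) N
  have h2 := Finset.sum_range_succ (fun j : ℕ => f j) N
  have hFN : f (N : ℕ) = f 0 := by
    have := hf 0
    rwa [zero_add] at this
  have h3 : ∑ j ∈ Finset.range N, f ((j : ℤ) + 1) = ∑ j ∈ Finset.range N, f ((j + 1 : ℕ)) := by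
    refine Finset.sum_congr rfl fun j _ => congrArg f (by push_cast; ring)
  rw [h3]
  norm_num at h1
  rw [hFN] at h2
  linarith [h1, h2]

lemma sum_shift (N : ℕ) (hN0 : 0 < N) (f : ℤ → ℝ) (hf : ∀ j : ℤ, f (j + N) = f j) (t : ℤ) :
    ∑ j ∈ Finset.range N, f (j + t) = ∑ j ∈ Finset.range N, f j := by
  induction t using Int.induction_on with
  | zero => simp
  | succ t ih =>
    have hg : ∀ j : ℤ, (fun j => f (j + t)) (j + N) = (fun j => f (j + t)) j := by
      intro j
      simp only
      rw [show j + (N:ℤ) + t = (j + t) + N by ring, hf]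
    have h := shift1 N hN0 (fun j => f (j + t)) hg
    rw [← ih, ← h]
    refine Finset.sum_congr rfl fun j _ => ?_
    congr 1
    ring
  | pred t ih =>
    have hg : ∀ j : ℤ, (fun j => f (j + (-(t:ℤ) - 1))) (j + N) = (fun j => f (j + (-(t:ℤ) - 1))) j := by
      intro j
      simp only
      rw [show j + (N:ℤ) + (-(t:ℤ) - 1) = (j + (-(t:ℤ) - 1)) + N by ring, hf]
    have h := shift1 N hN0 (fun j => f (j + (-(t:ℤ) - 1))) hg
    have h2 : ∑ j ∈ Finset.range N, f ((j : ℤ) + 1 + (-(t:ℤ) - 1)) = ∑ j ∈ Finset.range N, f (j + -(t:ℤ)) := by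
      refine Finset.sum_congr rfl fun j _ => ?_
      congr 1
      ring
    rw [h2] at h
    rw [← h, ih]

lemma cker_neg (N : ℕ) (hN : Odd N) (hN0 : 0 < N) (k : ℤ) : cker N (-k) = - cker N k := by
  rw [cker_eq_gker N hN hN0, cker_eq_gker N hN hN0, gker_neg]

lemma Tlem (N : ℕ) (hN : Odd N) (hN0 : 0 < N) (k l : ℤ) :
    ∑ j ∈ Finset.range N, cker N (j - k) * cker N (j - l)
      = (if (N : ℤ) ∣ (l - k) then 1 else 0) - 1 / N := by
  have hceq := cker_eq_gker N hN hN0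
  set f : ℤ → ℝ := fun j => gker N j * gker N (j + (k - l)) with hf
  have hfper : ∀ j : ℤ, f (j + N) = f j := by
    intro j
    simp only [hf]
    rw [gker_period N hN0, show j + (N:ℤ) + (k - l) = (j + (k - l)) + N by ring,
      gker_period N hN0]
  have h1 : ∑ j ∈ Finset.range N, cker N (j - k) * cker N (j - l)
      = ∑ j ∈ Finset.range N, f ((j : ℤ) + (-k)) := by
    refine Finset.sum_congr rfl fun j _ => ?_
    simp only [hf]
    rw [hceq, hceq]
    congr 2 <;> ring
  rw [h1, sum_shift N hN0 f hfper (-k)]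
  have h2 : ∑ j ∈ Finset.range N, f (j : ℤ)
      = - ∑ j ∈ Finset.range N, gker N (j : ℤ) * gker N ((l - k) - j) := by
    rw [← Finset.sum_neg_distrib]
    refine Finset.sum_congr rfl fun j _ => ?_
    simp only [hf]
    rw [show (j : ℤ) + (k - l) = -((l - k) - j) by ring, gker_neg]
    ring
  rw [h2, gker_conv N hN hN0 (l - k)]
  ring

lemma skewlem (N : ℕ) (hN : Odd N) (hN0 : 0 < N) (u v : ℤ → ℝ) :
    (∑ j ∈ Finset.range N, Hper N u j * v j)
      = -∑ j ∈ Finset.range N, u j * Hper N v j := by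
  simp only [Hper]
  rw [← Finset.sum_neg_distrib]
  simp only [Finset.sum_mul, Finset.mul_sum, neg_mul, mul_neg, ← Finset.sum_neg_distrib]
  rw [Finset.sum_comm]
  refine Finset.sum_congr rfl fun k _ => Finset.sum_congr rfl fun j _ => ?_
  have hc : cker N ((j:ℤ) - k) = - cker N ((k:ℤ) - j) := by
    rw [show ((j:ℤ) - k) = -((k:ℤ) - j) by ring, cker_neg N hN hN0]
  rw [hc]
  ring

lemma normlem (N : ℕ) (hN : Odd N) (hN0 : 0 < N) (u : ℤ → ℝ) :
    ∑ j ∈ Finset.range N, (Hper N u j) ^ 2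
      = ∑ j ∈ Finset.range N, (u j) ^ 2
        - (1 / N) * (∑ j ∈ Finset.range N, u j) ^ 2 := by
  have hdelta : ∀ k ∈ Finset.range N, ∀ l ∈ Finset.range N,
      (if (N : ℤ) ∣ ((l:ℤ) - k) then (1:ℝ) else 0) = (if k = l then (1:ℝ) else 0) := by
    intro k hk l hl
    rw [Finset.mem_range] at hk hl
    by_cases h : k = l
    · subst h; simp
    · rw [if_neg h, if_neg]
      intro hd
      have := Int.eq_zero_of_dvd_of_natAbs_lt_natAbs hd (by omega)
      omega
  have h1 : ∑ j ∈ Finset.range N, (Hper N u j) ^ 2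
      = ∑ k ∈ Finset.range N, ∑ l ∈ Finset.range N,
          (u k * u l) * ∑ j ∈ Finset.range N, cker N ((j:ℤ) - k) * cker N ((j:ℤ) - l) := by
    simp only [Hper, sq, Finset.sum_mul_sum]
    rw [Finset.sum_comm]
    refine Finset.sum_congr rfl fun k _ => ?_
    rw [Finset.sum_comm]
    refine Finset.sum_congr rfl fun l _ => ?_
    rw [Finset.mul_sum]
    refine Finset.sum_congr rfl fun j _ => ?_
    ring
  rw [h1]
  have h2 : ∀ k ∈ Finset.range N, ∀ l ∈ Finset.range N,
      (u k * u l) * (∑ j ∈ Finset.range N, cker N ((j:ℤ) - k) * cker N ((j:ℤ) - l))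
        = (if k = l then u k * u l else 0) - (1 / N) * (u k * u l) := by
    intro k hk l hl
    rw [Tlem N hN hN0 k l, hdelta k hk l hl]
    by_cases h : k = l
    · subst h; simp; ring
    · rw [if_neg h, if_neg h]; ring
  rw [Finset.sum_congr rfl fun k hk => Finset.sum_congr rfl fun l hl => h2 k hk l hl]
  rw [Finset.sum_congr rfl fun k _ => Finset.sum_sub_distrib _ _, Finset.sum_sub_distrib]
  congr 1
  · refine Finset.sum_congr rfl fun k hk => ?_
    rw [Finset.sum_ite_eq (Finset.range N) k (fun l => u k * u l), if_pos hk, sq]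
  · rw [sq, Finset.sum_mul_sum, Finset.mul_sum]
    refine Finset.sum_congr rfl fun k _ => ?_
    rw [Finset.mul_sum]

theorem stmt_17 (N : ℕ) (hN : Odd N) (hN3 : 3 ≤ N)
    (u v : ℤ → ℝ) (hu : ∀ j : ℤ, u (j + N) = u j) (hv : ∀ j : ℤ, v (j + N) = v j) :
    ((∑ j ∈ Finset.range N, Hper N u j * v j)
        = -∑ j ∈ Finset.range N, u j * Hper N v j)
    ∧ Real.sqrt (∑ j ∈ Finset.range N, (Hper N u j) ^ 2)
        ≤ Real.sqrt (∑ j ∈ Finset.range N, (u j) ^ 2)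
    ∧ ((∑ j ∈ Finset.range N, u j) = 0 →
        Real.sqrt (∑ j ∈ Finset.range N, (Hper N u j) ^ 2)
          = Real.sqrt (∑ j ∈ Finset.range N, (u j) ^ 2)) := by
  have hN0 : 0 < N := by omega
  refine ⟨skewlem N hN hN0 u v, ?_, ?_⟩
  · apply Real.sqrt_le_sqrt
    rw [normlem N hN hN0 u]
    have h : (0:ℝ) ≤ (1 / (N:ℝ)) * (∑ j ∈ Finset.range N, u j) ^ 2 := by positivity
    linarith
  · intro h
    rw [normlem N hN hN0 u, h]
    norm_num
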